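/- For every odd integer n ≥ 5, there exists a connected graph G on n vertices such that d(x) + d(y) ≥ n/2 − 1 for every pair of nonadjacent vertices x, y, but pc(G) = 3. (Namely, take a triangle G1 and two complete graphs G2, G3 on (n−3)/2 vertices, pick vertices v_i ∈ G_i, and join v1 to v2 and v1 to v3 by edges.) -/

import Mathlib

open SimpleGraph

/-- An edge-coloring `c` with `k` colors is a *proper connection coloring* of `G`
if every pair of vertices is joined by a path whose consecutive edges have distinct colors. -/
def ProperConnColoring {V : Type*} (G : SimpleGraph V) {k : ℕ} (c : Sym2 V → Fin k) : Prop :=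
  ∀ u v : V, ∃ p : G.Walk u v, p.IsPath ∧ (p.edges.map c).Chain' (· ≠ ·)

/-- The proper connection number of `G`. -/
noncomputable def pc {V : Type*} (G : SimpleGraph V) : ℕ :=
  sInf {k | ∃ c : Sym2 V → Fin k, ProperConnColoring G c}

/-- Sharpness of the degree sum bound: for every odd `n ≥ 5` there is a connected graph
on `n` vertices with `d(x) + d(y) ≥ n/2 − 1` for all nonadjacent `x ≠ y`
but with proper connection number 3. -/
def pcBlk (p : ℕ) (i : ℕ) : ℕ := if i < 3 then 0 else if i < 3 + p then 1 else 2

def pcG (n p : ℕ) : SimpleGraph (Fin n) where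
  Adj x y := x ≠ y ∧ (pcBlk p x.val = pcBlk p y.val ∨
    (x.val = 0 ∧ (y.val = 3 ∨ y.val = 3 + p)) ∨ (y.val = 0 ∧ (x.val = 3 ∨ x.val = 3 + p)))
  symm := by
    constructor
    rintro x y ⟨h1, h2⟩
    exact ⟨h1.symm, by tauto⟩
  loopless := by constructor; rintro x ⟨h, -⟩; exact h rfl

section

variable {n p : ℕ} (hp1 : 1 ≤ p) (hpn : 3 + p < n)

lemma pcG_adj {x y : Fin n} : (pcG n p).Adj x y ↔ (x ≠ y ∧ (pcBlk p x.val = pcBlk p y.val ∨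
    (x.val = 0 ∧ (y.val = 3 ∨ y.val = 3 + p)) ∨ (y.val = 0 ∧ (x.val = 3 ∨ x.val = 3 + p)))) :=
  Iff.rfl

-- special vertices
lemma pcBlk_eq_zero_iff {i : ℕ} : pcBlk p i = 0 ↔ i < 3 := by
  unfold pcBlk; split_ifs <;> simp <;> omega

lemma pcBlk_eq_one_iff {i : ℕ} : pcBlk p i = 1 ↔ 3 ≤ i ∧ i < 3 + p := by
  unfold pcBlk; split_ifs <;> simp <;> omega

lemma pcBlk_eq_two_iff {i : ℕ} : pcBlk p i = 2 ↔ 3 + p ≤ i := by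
  unfold pcBlk; split_ifs <;> simp <;> omega

end
section
variable {n p : ℕ}

lemma pcG_adj_zero {x y : Fin n} (hx : x.val = 0) (h : (pcG n p).Adj x y) :
    y.val = 1 ∨ y.val = 2 ∨ y.val = 3 ∨ y.val = 3 + p := by
  obtain ⟨hne, hc⟩ := h
  have hne' : x.val ≠ y.val := fun hh => hne (Fin.ext hh)
  rcases hc with hb | ⟨h1, h2⟩ | ⟨h1, h2⟩
  · rw [hx] at hb
    have : pcBlk p 0 = 0 := by simp [pcBlk]
    have hy : y.val < 3 := pcBlk_eq_zero_iff.mp (by rw [← hb]; exact this)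
    omega
  · omega
  · omega

lemma pcG_adj_one {x y : Fin n} (hx : x.val = 1) (h : (pcG n p).Adj x y) :
    y.val = 0 ∨ y.val = 2 := by
  obtain ⟨hne, hc⟩ := h
  have hne' : x.val ≠ y.val := fun hh => hne (Fin.ext hh)
  rcases hc with hb | ⟨h1, h2⟩ | ⟨h1, h2⟩
  · rw [hx] at hb
    have : pcBlk p 1 = 0 := by simp [pcBlk]
    have hy : y.val < 3 := pcBlk_eq_zero_iff.mp (by rw [← hb]; exact this)
    omega
  · omega
  · omega

lemma pcG_adj_two {x y : Fin n} (hx : x.val = 2) (h : (pcG n p).Adj x y) :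
    y.val = 0 ∨ y.val = 1 := by
  obtain ⟨hne, hc⟩ := h
  have hne' : x.val ≠ y.val := fun hh => hne (Fin.ext hh)
  rcases hc with hb | ⟨h1, h2⟩ | ⟨h1, h2⟩
  · rw [hx] at hb
    have : pcBlk p 2 = 0 := by simp [pcBlk]
    have hy : y.val < 3 := pcBlk_eq_zero_iff.mp (by rw [← hb]; exact this)
    omega
  · omega
  · omega

lemma pcG_adj_v2 (hp1 : 1 ≤ p) {x y : Fin n} (hx : x.val = 3) (h : (pcG n p).Adj x y) :
    y.val = 0 ∨ pcBlk p y.val = 1 := by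
  obtain ⟨hne, hc⟩ := h
  rcases hc with hb | ⟨h1, h2⟩ | ⟨h1, h2⟩
  · right; rw [← hb, hx, pcBlk_eq_one_iff]; omega
  · omega
  · omega

lemma pcG_adj_v3 (hp1 : 1 ≤ p) {x y : Fin n} (hx : x.val = 3 + p) (h : (pcG n p).Adj x y) :
    y.val = 0 ∨ pcBlk p y.val = 2 := by
  obtain ⟨hne, hc⟩ := h
  rcases hc with hb | ⟨h1, h2⟩ | ⟨h1, h2⟩
  · right; rw [← hb, hx, pcBlk_eq_two_iff]
  · omega
  · omega

lemma pcG_escape1 {u v : Fin n} (W : (pcG n p).Walk u v) :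
    pcBlk p u.val = 1 → pcBlk p v.val ≠ 1 →
    (∃ z ∈ W.support, z.val = 3) ∧ (∃ z ∈ W.support, z.val = 0) := by
  induction W with
  | nil => exact fun hu hv => absurd hu hv
  | @cons a b c h W ih =>
    intro hu hv
    by_cases hb : pcBlk p b.val = 1
    · obtain ⟨⟨z1, hz1, hz1'⟩, ⟨z2, hz2, hz2'⟩⟩ := ih hb hv
      exact ⟨⟨z1, by simp [Walk.support_cons, hz1], hz1'⟩,
             ⟨z2, by simp [Walk.support_cons, hz2], hz2'⟩⟩
    · obtain ⟨hne, hc⟩ := id h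
      have ha3 : a.val = 3 ∧ b.val = 0 := by
        rw [pcBlk_eq_one_iff] at hu
        rcases hc with hcc | ⟨h1, h2⟩ | ⟨h1, h2⟩
        · exact absurd (hcc ▸ pcBlk_eq_one_iff.mpr hu) hb
        · omega
        · omega
      refine ⟨⟨a, by simp [Walk.support_cons], ha3.1⟩,
              ⟨b, by simp [Walk.support_cons, Walk.start_mem_support], ha3.2⟩⟩

lemma pcG_escape2 {u v : Fin n} (W : (pcG n p).Walk u v) :
    pcBlk p u.val = 2 → pcBlk p v.val ≠ 2 →
    (∃ z ∈ W.support, z.val = 3 + p) ∧ (∃ z ∈ W.support, z.val = 0) := by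
  induction W with
  | nil => exact fun hu hv => absurd hu hv
  | @cons a b c h W ih =>
    intro hu hv
    by_cases hb : pcBlk p b.val = 2
    · obtain ⟨⟨z1, hz1, hz1'⟩, ⟨z2, hz2, hz2'⟩⟩ := ih hb hv
      exact ⟨⟨z1, by simp [Walk.support_cons, hz1], hz1'⟩,
             ⟨z2, by simp [Walk.support_cons, hz2], hz2'⟩⟩
    · obtain ⟨hne, hc⟩ := id h
      have ha3 : a.val = 3 + p ∧ b.val = 0 := by
        rw [pcBlk_eq_two_iff] at hu
        rcases hc with hcc | ⟨h1, h2⟩ | ⟨h1, h2⟩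
        · exact absurd (hcc ▸ (pcBlk_eq_two_iff.mpr hu)) hb
        · omega
        · omega
      refine ⟨⟨a, by simp [Walk.support_cons], ha3.1⟩,
              ⟨b, by simp [Walk.support_cons, Walk.start_mem_support], ha3.2⟩⟩

end

section claims
variable {n p : ℕ}

lemma pcG_claimA (hp1 : 1 ≤ p) (hpn : 3 + p < n) {k : ℕ} (c : Sym2 (Fin n) → Fin k)
    {x y z : Fin n} (hx : x.val = 3) (hy : y.val = 3 + p) (hz : z.val = 0)
    (P : (pcG n p).Walk x y) (hP : P.IsPath) (hch : (P.edges.map c).Chain' (· ≠ ·)) :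
    c s(x, z) ≠ c s(z, y) := by
  cases P with
  | nil => omega
  | @cons _ b _ h W =>
    rw [Walk.cons_isPath_iff] at hP
    rcases pcG_adj_v2 hp1 hx h with hb0 | hb1
    · have hbz : z = b := Fin.ext (by omega)
      subst hbz
      cases W with
      | nil => omega
      | @cons _ d _ h2 W2 =>
        rw [Walk.cons_isPath_iff] at hP
        obtain ⟨⟨hW2, hbW2⟩, hxsup⟩ := hP
        rcases pcG_adj_zero hb0 h2 with hd | hd | hd | hd
        · exfalso
          obtain ⟨-, w, hw, hw0⟩ := pcG_escape2 W2.reverse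
            (by rw [pcBlk_eq_two_iff]; omega) (by rw [Ne, pcBlk_eq_two_iff]; omega)
          rw [Walk.support_reverse, List.mem_reverse] at hw
          exact hbW2 (by rwa [show w = z from Fin.ext (by omega)] at hw)
        · exfalso
          obtain ⟨-, w, hw, hw0⟩ := pcG_escape2 W2.reverse
            (by rw [pcBlk_eq_two_iff]; omega) (by rw [Ne, pcBlk_eq_two_iff]; omega)
          rw [Walk.support_reverse, List.mem_reverse] at hw
          exact hbW2 (by rwa [show w = z from Fin.ext (by omega)] at hw)
        · exact absurd (by
            rw [Walk.support_cons]
            exact List.mem_cons_of_mem _ (by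
              rw [show x = d from Fin.ext (by omega)]; exact W2.start_mem_support)) hxsup
        · have hdy : d = y := Fin.ext (by omega)
          subst hdy
          have : W2 = Walk.nil := Walk.isPath_iff_eq_nil.mp hW2
          subst this
          simpa [List.Chain', List.isChain_cons_cons] using hch
    · exfalso
      obtain ⟨w, hw, hw3⟩ := (pcG_escape1 W hb1 (by rw [Ne, pcBlk_eq_one_iff]; omega)).1
      exact hP.2 (by rwa [show w = x from Fin.ext (by omega)] at hw)

lemma pcG_adj_tri {x y : Fin n} (hx : x.val = 1 ∨ x.val = 2) (h : (pcG n p).Adj x y) :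
    y.val = 0 ∨ ((y.val = 1 ∨ y.val = 2) ∧ y.val ≠ x.val) := by
  rcases hx with hx | hx
  · rcases pcG_adj_one hx h with h' | h'
    · exact Or.inl h'
    · exact Or.inr ⟨Or.inr h', by omega⟩
  · rcases pcG_adj_two hx h with h' | h'
    · exact Or.inl h'
    · exact Or.inr ⟨Or.inl h', by omega⟩

lemma pcG_claimB (hp1 : 1 ≤ p) (hpn : 3 + p < n) {k : ℕ} (c : Sym2 (Fin n) → Fin k)
    {x t o z : Fin n} (hx : x.val = 3 ∨ x.val = 3 + p)
    (hto : (t.val = 1 ∧ o.val = 2) ∨ (t.val = 2 ∧ o.val = 1)) (hz : z.val = 0)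
    (P : (pcG n p).Walk x t) (hP : P.IsPath) (hch : (P.edges.map c).Chain' (· ≠ ·)) :
    c s(x, z) ≠ c s(z, t) ∨ (c s(x, z) ≠ c s(z, o) ∧ c s(z, o) ≠ c s(o, t)) := by
  have hblkt : pcBlk p t.val = 0 := by rw [pcBlk_eq_zero_iff]; omega
  cases P with
  | nil => omega
  | @cons _ b _ h W =>
    rw [Walk.cons_isPath_iff] at hP
    have hb0 : b.val = 0 := by
      rcases hx with hx | hx
      · rcases pcG_adj_v2 hp1 hx h with hb0 | hb1
        · exact hb0
        · exfalso
          obtain ⟨w, hw, hw3⟩ := (pcG_escape1 W hb1 (by omega)).1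
          exact hP.2 (by rwa [show w = x from Fin.ext (by omega)] at hw)
      · rcases pcG_adj_v3 hp1 hx h with hb0 | hb1
        · exact hb0
        · exfalso
          obtain ⟨w, hw, hw3⟩ := (pcG_escape2 W hb1 (by omega)).1
          exact hP.2 (by rwa [show w = x from Fin.ext (by omega)] at hw)
    have hbz : z = b := Fin.ext (by omega)
    subst hbz
    cases W with
    | nil => omega
    | @cons _ d _ h2 W2 =>
      rw [Walk.cons_isPath_iff] at hP
      obtain ⟨⟨hW2, hzW2⟩, hxsup⟩ := hP
      have hesc1 : d.val = 3 → False := by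
        intro hd
        obtain ⟨-, w, hw, hw0⟩ := pcG_escape1 W2 (by rw [pcBlk_eq_one_iff]; omega) (by omega)
        exact hzW2 (by rwa [show w = z from Fin.ext (by omega)] at hw)
      have hesc2 : d.val = 3 + p → False := by
        intro hd
        obtain ⟨-, w, hw, hw0⟩ := pcG_escape2 W2 (by rw [pcBlk_eq_two_iff]; omega) (by omega)
        exact hzW2 (by rwa [show w = z from Fin.ext (by omega)] at hw)
      have htri : d.val = 1 ∨ d.val = 2 := by
        rcases pcG_adj_zero hb0 h2 with hd | hd | hd | hd
        · exact Or.inl hd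
        · exact Or.inr hd
        · exact absurd hd (fun hh => hesc1 hh)
        · exact absurd hd (fun hh => hesc2 hh)
      by_cases hdt : d.val = t.val
      · -- d = t : short path, left disjunct
        have hdt' : d = t := Fin.ext hdt
        subst hdt'
        have : W2 = Walk.nil := Walk.isPath_iff_eq_nil.mp hW2
        subst this
        left
        simpa [List.Chain', List.isChain_cons_cons] using hch
      · -- d = o : long path, right disjunct
        have hdo : d = o := Fin.ext (by omega)
        subst hdo
        cases W2 with
        | nil => omega
        | @cons _ e _ h3 W3 =>
          rw [Walk.cons_isPath_iff] at hW2
          obtain ⟨hW3, hdW3⟩ := hW2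
          have he : e.val = t.val := by
            rcases pcG_adj_tri (by omega) h3 with he | ⟨he, hne⟩
            · exfalso
              apply hzW2
              rw [Walk.support_cons]
              exact List.mem_cons_of_mem _
                (by rw [show z = e from Fin.ext (by omega)]; exact W3.start_mem_support)
            · omega
          have he' : e = t := Fin.ext he
          subst he'
          have : W3 = Walk.nil := Walk.isPath_iff_eq_nil.mp hW3
          subst this
          right
          simpa [List.Chain', List.isChain_cons_cons] using hch


lemma pcG_no_small (hp1 : 1 ≤ p) (hpn : 3 + p < n) {k : ℕ} (hk : k ≤ 2)
    (c : Sym2 (Fin n) → Fin k) : ¬ ProperConnColoring (pcG n p) c := by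
  intro hc
  obtain ⟨z, hz⟩ : ∃ z : Fin n, z.val = 0 := ⟨⟨0, by omega⟩, rfl⟩
  obtain ⟨t1, ht1⟩ : ∃ w : Fin n, w.val = 1 := ⟨⟨1, by omega⟩, rfl⟩
  obtain ⟨t2, ht2⟩ : ∃ w : Fin n, w.val = 2 := ⟨⟨2, by omega⟩, rfl⟩
  obtain ⟨x2, hx2⟩ : ∃ w : Fin n, w.val = 3 := ⟨⟨3, by omega⟩, rfl⟩
  obtain ⟨x3, hx3⟩ : ∃ w : Fin n, w.val = 3 + p := ⟨⟨3 + p, hpn⟩, rfl⟩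
  obtain ⟨PA, hPA, hchA⟩ := hc x2 x3
  have A := pcG_claimA hp1 hpn c hx2 hx3 hz PA hPA hchA
  obtain ⟨PB, hPB, hchB⟩ := hc x2 t1
  have B := pcG_claimB hp1 hpn c (Or.inl hx2) (Or.inl ⟨ht1, ht2⟩) hz PB hPB hchB
  obtain ⟨PC, hPC, hchC⟩ := hc x2 t2
  have C := pcG_claimB hp1 hpn c (Or.inl hx2) (Or.inr ⟨ht2, ht1⟩) hz PC hPC hchC
  obtain ⟨PD, hPD, hchD⟩ := hc x3 t1
  have D := pcG_claimB hp1 hpn c (Or.inr hx3) (Or.inl ⟨ht1, ht2⟩) hz PD hPD hchD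
  obtain ⟨PE, hPE, hchE⟩ := hc x3 t2
  have E := pcG_claimB hp1 hpn c (Or.inr hx3) (Or.inr ⟨ht2, ht1⟩) hz PE hPE hchE
  rw [show s(z, x3) = s(x3, z) from Sym2.eq_swap] at A
  rw [show s(t2, t1) = s(t1, t2) from Sym2.eq_swap] at B D
  have h1 : (c s(x2, z)).val < 2 := lt_of_lt_of_le (c s(x2, z)).isLt hk
  have h2 : (c s(x3, z)).val < 2 := lt_of_lt_of_le (c s(x3, z)).isLt hk
  have h3 : (c s(z, t1)).val < 2 := lt_of_lt_of_le (c s(z, t1)).isLt hk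
  have h4 : (c s(z, t2)).val < 2 := lt_of_lt_of_le (c s(z, t2)).isLt hk
  have h5 : (c s(t1, t2)).val < 2 := lt_of_lt_of_le (c s(t1, t2)).isLt hk
  simp only [Ne, ← Fin.val_eq_val] at A B C D E
  omega

end claims

section upper
variable {n p : ℕ}

/-- the coloring function on pairs of values -/
def pcColN (p : ℕ) (i j : ℕ) : Fin 3 :=
  if (i = 0 ∧ j = 3) ∨ (j = 0 ∧ i = 3) then 0
  else if (i = 0 ∧ j = 3 + p) ∨ (j = 0 ∧ i = 3 + p) then 1 else 2

def pcCol (n p : ℕ) : Sym2 (Fin n) → Fin 3 :=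
  Sym2.lift ⟨fun a b => pcColN p a.val b.val, by
    intro a b; simp only [pcColN]; split_ifs <;> first | rfl | tauto⟩

@[simp] lemma pcCol_mk {a b : Fin n} : pcCol n p s(a, b) = pcColN p a.val b.val := rfl

lemma pcColN_02 {i j : ℕ} (h : ¬((i = 0 ∧ j = 3) ∨ (j = 0 ∧ i = 3))
    ∧ ¬((i = 0 ∧ j = 3 + p) ∨ (j = 0 ∧ i = 3 + p))) : pcColN p i j = 2 := by
  unfold pcColN; rw [if_neg h.1, if_neg h.2]

lemma pcColN_e2 {i j : ℕ} (h : (i = 0 ∧ j = 3) ∨ (j = 0 ∧ i = 3)) : pcColN p i j = 0 := by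
  unfold pcColN; rw [if_pos h]

lemma pcColN_e3 (hp1 : 1 ≤ p) {i j : ℕ}
    (h : (i = 0 ∧ j = 3 + p) ∨ (j = 0 ∧ i = 3 + p)) : pcColN p i j = 1 := by
  unfold pcColN; rw [if_neg (by omega), if_pos h]


lemma pcG_adj_mk {x y : Fin n} (h : x.val ≠ y.val)
    (hc : pcBlk p x.val = pcBlk p y.val ∨ (x.val = 0 ∧ (y.val = 3 ∨ y.val = 3 + p)) ∨
      (y.val = 0 ∧ (x.val = 3 ∨ x.val = 3 + p))) : (pcG n p).Adj x y :=
  ⟨fun e => h (congrArg Fin.val e), hc⟩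

lemma pcG_good_symm {k : ℕ} {c : Sym2 (Fin n) → Fin k} {u v : Fin n}
    (h : ∃ P : (pcG n p).Walk u v, P.IsPath ∧ (P.edges.map c).Chain' (· ≠ ·)) :
    ∃ P : (pcG n p).Walk v u, P.IsPath ∧ (P.edges.map c).Chain' (· ≠ ·) := by
  obtain ⟨P, hP, hch⟩ := h
  refine ⟨P.reverse, hP.reverse, ?_⟩
  rw [Walk.edges_reverse, List.map_reverse, List.Chain', List.isChain_reverse]
  rw [List.Chain'] at hch
  exact hch.imp fun a b hab => Ne.symm hab

lemma pcG_proper (hp1 : 1 ≤ p) (hpn : 3 + p < n) :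
    ProperConnColoring (pcG n p) (pcCol n p) := by
  obtain ⟨z, hz⟩ : ∃ w : Fin n, w.val = 0 := ⟨⟨0, by omega⟩, rfl⟩
  obtain ⟨x2, hx2⟩ : ∃ w : Fin n, w.val = 3 := ⟨⟨3, by omega⟩, rfl⟩
  obtain ⟨x3, hx3⟩ : ∃ w : Fin n, w.val = 3 + p := ⟨⟨3 + p, hpn⟩, rfl⟩
  have key : ∀ u v : Fin n, u ≠ v → pcBlk p u.val ≤ pcBlk p v.val →
      ∃ P : (pcG n p).Walk u v, P.IsPath ∧ (P.edges.map (pcCol n p)).Chain' (· ≠ ·) := by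
    intro u v huv hble
    have hvne : u.val ≠ v.val := fun e => huv (Fin.ext e)
    have hun : u.val < n := u.isLt
    have hvn : v.val < n := v.isLt
    have hbu : pcBlk p u.val = 0 ∨ pcBlk p u.val = 1 ∨ pcBlk p u.val = 2 := by
      unfold pcBlk; split_ifs <;> simp
    have hbv : pcBlk p v.val = 0 ∨ pcBlk p v.val = 1 ∨ pcBlk p v.val = 2 := by
      unfold pcBlk; split_ifs <;> simp
    by_cases hbb : pcBlk p u.val = pcBlk p v.val
    · exact ⟨Walk.cons (pcG_adj_mk hvne (Or.inl hbb)) Walk.nil, by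
        simp [Walk.cons_isPath_iff, huv], by simp [List.Chain']⟩
    · rcases hbu with hu | hu | hu <;> rcases hbv with hv | hv | hv <;>
        rw [hu, hv] at hbb hble <;> try omega
      -- case bu = 0, bv = 1
      · rw [pcBlk_eq_zero_iff] at hu
        rw [pcBlk_eq_one_iff] at hv
        by_cases hu0 : u.val = 0
        · by_cases hv3 : v.val = 3
          · exact ⟨Walk.cons (pcG_adj_mk hvne (Or.inr (Or.inl ⟨hu0, Or.inl hv3⟩))) Walk.nil,
              by simp [Walk.cons_isPath_iff, huv], by simp [List.Chain']⟩
          · refine ⟨Walk.cons (pcG_adj_mk (x := u) (y := x2) (by omega)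
                (Or.inr (Or.inl ⟨hu0, Or.inl hx2⟩)))
              (Walk.cons (pcG_adj_mk (by omega)
                (Or.inl (by rw [pcBlk_eq_one_iff.mpr (by omega),
                  pcBlk_eq_one_iff.mpr (by omega)]))) Walk.nil), ?_, ?_⟩
            · simp [Walk.cons_isPath_iff, Fin.ext_iff]
              omega
            · simp only [Walk.edges_cons, Walk.edges_nil, List.map_cons, List.map_nil, pcCol_mk]
              rw [hu0, hx2, pcColN_e2 (by omega), pcColN_02 (by omega)]
              simp [List.Chain']
        · by_cases hv3 : v.val = 3
          · refine ⟨Walk.cons (pcG_adj_mk (x := u) (y := z) (by omega)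
                (Or.inl (by rw [pcBlk_eq_zero_iff.mpr (by omega),
                  pcBlk_eq_zero_iff.mpr (by omega)])))
              (Walk.cons (pcG_adj_mk (by omega)
                (Or.inr (Or.inl ⟨hz, Or.inl hv3⟩))) Walk.nil), ?_, ?_⟩
            · simp [Walk.cons_isPath_iff, Fin.ext_iff]
              omega
            · simp only [Walk.edges_cons, Walk.edges_nil, List.map_cons, List.map_nil, pcCol_mk]
              rw [hz, hv3, pcColN_02 (by omega), pcColN_e2 (by omega)]
              simp [List.Chain']
          · refine ⟨Walk.cons (pcG_adj_mk (x := u) (y := z) (by omega)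
                (Or.inl (by rw [pcBlk_eq_zero_iff.mpr (by omega),
                  pcBlk_eq_zero_iff.mpr (by omega)])))
              (Walk.cons (pcG_adj_mk (x := z) (y := x2) (by omega)
                (Or.inr (Or.inl ⟨hz, Or.inl hx2⟩)))
              (Walk.cons (pcG_adj_mk (by omega)
                (Or.inl (by rw [pcBlk_eq_one_iff.mpr (by omega),
                  pcBlk_eq_one_iff.mpr (by omega)]))) Walk.nil)), ?_, ?_⟩
            · simp [Walk.cons_isPath_iff, Fin.ext_iff]
              omega
            · simp only [Walk.edges_cons, Walk.edges_nil, List.map_cons, List.map_nil, pcCol_mk]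
              rw [hz, hx2, pcColN_02 (by omega), pcColN_e2 (by omega), pcColN_02 (by omega)]
              simp [List.Chain']
      -- case bu = 0, bv = 2
      · rw [pcBlk_eq_zero_iff] at hu
        rw [pcBlk_eq_two_iff] at hv
        by_cases hu0 : u.val = 0
        · by_cases hv3 : v.val = 3 + p
          · exact ⟨Walk.cons (pcG_adj_mk hvne (Or.inr (Or.inl ⟨hu0, Or.inr hv3⟩))) Walk.nil,
              by simp [Walk.cons_isPath_iff, huv], by simp [List.Chain']⟩
          · refine ⟨Walk.cons (pcG_adj_mk (x := u) (y := x3) (by omega)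
                (Or.inr (Or.inl ⟨hu0, Or.inr hx3⟩)))
              (Walk.cons (pcG_adj_mk (by omega)
                (Or.inl (by rw [pcBlk_eq_two_iff.mpr (by omega),
                  pcBlk_eq_two_iff.mpr (by omega)]))) Walk.nil), ?_, ?_⟩
            · simp [Walk.cons_isPath_iff, Fin.ext_iff]
              omega
            · simp only [Walk.edges_cons, Walk.edges_nil, List.map_cons, List.map_nil, pcCol_mk]
              rw [hu0, hx3, pcColN_e3 hp1 (by omega), pcColN_02 (by omega)]
              simp [List.Chain']
        · by_cases hv3 : v.val = 3 + p
          · refine ⟨Walk.cons (pcG_adj_mk (x := u) (y := z) (by omega)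
                (Or.inl (by rw [pcBlk_eq_zero_iff.mpr (by omega),
                  pcBlk_eq_zero_iff.mpr (by omega)])))
              (Walk.cons (pcG_adj_mk (by omega)
                (Or.inr (Or.inl ⟨hz, Or.inr hv3⟩))) Walk.nil), ?_, ?_⟩
            · simp [Walk.cons_isPath_iff, Fin.ext_iff]
              omega
            · simp only [Walk.edges_cons, Walk.edges_nil, List.map_cons, List.map_nil, pcCol_mk]
              rw [hz, hv3, pcColN_02 (by omega), pcColN_e3 hp1 (by omega)]
              simp [List.Chain']
          · refine ⟨Walk.cons (pcG_adj_mk (x := u) (y := z) (by omega)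
                (Or.inl (by rw [pcBlk_eq_zero_iff.mpr (by omega),
                  pcBlk_eq_zero_iff.mpr (by omega)])))
              (Walk.cons (pcG_adj_mk (x := z) (y := x3) (by omega)
                (Or.inr (Or.inl ⟨hz, Or.inr hx3⟩)))
              (Walk.cons (pcG_adj_mk (by omega)
                (Or.inl (by rw [pcBlk_eq_two_iff.mpr (by omega),
                  pcBlk_eq_two_iff.mpr (by omega)]))) Walk.nil)), ?_, ?_⟩
            · simp [Walk.cons_isPath_iff, Fin.ext_iff]
              omega
            · simp only [Walk.edges_cons, Walk.edges_nil, List.map_cons, List.map_nil, pcCol_mk]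
              rw [hz, hx3, pcColN_02 (by omega), pcColN_e3 hp1 (by omega), pcColN_02 (by omega)]
              simp [List.Chain']
      -- case bu = 1, bv = 2
      · rw [pcBlk_eq_one_iff] at hu
        rw [pcBlk_eq_two_iff] at hv
        by_cases hu3 : u.val = 3
        · by_cases hv3 : v.val = 3 + p
          · refine ⟨Walk.cons (pcG_adj_mk (x := u) (y := z) (by omega)
                (Or.inr (Or.inr ⟨hz, Or.inl hu3⟩)))
              (Walk.cons (pcG_adj_mk (by omega)
                (Or.inr (Or.inl ⟨hz, Or.inr hv3⟩))) Walk.nil), ?_, ?_⟩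
            · simp [Walk.cons_isPath_iff, Fin.ext_iff]
              omega
            · simp only [Walk.edges_cons, Walk.edges_nil, List.map_cons, List.map_nil, pcCol_mk]
              rw [hz, hu3, hv3, pcColN_e2 (by omega), pcColN_e3 hp1 (by omega)]
              simp [List.Chain']
          · refine ⟨Walk.cons (pcG_adj_mk (x := u) (y := z) (by omega)
                (Or.inr (Or.inr ⟨hz, Or.inl hu3⟩)))
              (Walk.cons (pcG_adj_mk (x := z) (y := x3) (by omega)
                (Or.inr (Or.inl ⟨hz, Or.inr hx3⟩)))
              (Walk.cons (pcG_adj_mk (by omega)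
                (Or.inl (by rw [pcBlk_eq_two_iff.mpr (by omega),
                  pcBlk_eq_two_iff.mpr (by omega)]))) Walk.nil)), ?_, ?_⟩
            · simp [Walk.cons_isPath_iff, Fin.ext_iff]
              omega
            · simp only [Walk.edges_cons, Walk.edges_nil, List.map_cons, List.map_nil, pcCol_mk]
              rw [hz, hu3, hx3, pcColN_e2 (by omega), pcColN_e3 hp1 (by omega),
                pcColN_02 (by omega)]
              simp [List.Chain']
        · by_cases hv3 : v.val = 3 + p
          · refine ⟨Walk.cons (pcG_adj_mk (x := u) (y := x2) (by omega)
                (Or.inl (by rw [pcBlk_eq_one_iff.mpr (by omega),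
                  pcBlk_eq_one_iff.mpr (by omega)])))
              (Walk.cons (pcG_adj_mk (x := x2) (y := z) (by omega)
                (Or.inr (Or.inr ⟨hz, Or.inl hx2⟩)))
              (Walk.cons (pcG_adj_mk (by omega)
                (Or.inr (Or.inl ⟨hz, Or.inr hv3⟩))) Walk.nil)), ?_, ?_⟩
            · simp [Walk.cons_isPath_iff, Fin.ext_iff]
              omega
            · simp only [Walk.edges_cons, Walk.edges_nil, List.map_cons, List.map_nil, pcCol_mk]
              rw [hz, hx2, hv3, pcColN_02 (by omega), pcColN_e2 (by omega),
                pcColN_e3 hp1 (by omega)]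
              simp [List.Chain']
          · refine ⟨Walk.cons (pcG_adj_mk (x := u) (y := x2) (by omega)
                (Or.inl (by rw [pcBlk_eq_one_iff.mpr (by omega),
                  pcBlk_eq_one_iff.mpr (by omega)])))
              (Walk.cons (pcG_adj_mk (x := x2) (y := z) (by omega)
                (Or.inr (Or.inr ⟨hz, Or.inl hx2⟩)))
              (Walk.cons (pcG_adj_mk (x := z) (y := x3) (by omega)
                (Or.inr (Or.inl ⟨hz, Or.inr hx3⟩)))
              (Walk.cons (pcG_adj_mk (by omega)
                (Or.inl (by rw [pcBlk_eq_two_iff.mpr (by omega),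
                  pcBlk_eq_two_iff.mpr (by omega)]))) Walk.nil))), ?_, ?_⟩
            · simp [Walk.cons_isPath_iff, Fin.ext_iff]
              omega
            · simp only [Walk.edges_cons, Walk.edges_nil, List.map_cons, List.map_nil, pcCol_mk]
              rw [hz, hx2, hx3, pcColN_02 (by omega), pcColN_e2 (by omega),
                pcColN_e3 hp1 (by omega), pcColN_02 (by omega)]
              simp [List.Chain']
  intro u v
  by_cases huv : u = v
  · subst huv; exact ⟨Walk.nil, by simp, by simp [List.Chain']⟩
  · rcases le_total (pcBlk p u.val) (pcBlk p v.val) with hle | hle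
    · exact key u v huv hle
    · exact pcG_good_symm (key v u (Ne.symm huv) hle)

end upper

section final
variable {n p : ℕ}

lemma pcG_pc_eq_three (hp1 : 1 ≤ p) (hpn : 3 + p < n) : pc (pcG n p) = 3 := by
  have h3 : 3 ∈ {k | ∃ c : Sym2 (Fin n) → Fin k, ProperConnColoring (pcG n p) c} :=
    ⟨pcCol n p, pcG_proper hp1 hpn⟩
  refine le_antisymm (Nat.sInf_le h3) ?_
  unfold pc
  by_contra hlt
  push_neg at hlt
  have hmem := Nat.sInf_mem (s := {k | ∃ c : Sym2 (Fin n) → Fin k,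
    ProperConnColoring (pcG n p) c}) ⟨3, h3⟩
  obtain ⟨c, hc⟩ := hmem
  exact pcG_no_small hp1 hpn (by omega) c hc

lemma pcG_connected (hp1 : 1 ≤ p) (hpn : 3 + p < n) : (pcG n p).Connected := by
  have h0 : 0 < n := by omega
  rw [connected_iff]
  refine ⟨?_, ⟨⟨0, h0⟩⟩⟩
  have hreach : ∀ u : Fin n, (pcG n p).Reachable (⟨0, h0⟩ : Fin n) u := by
    intro u
    have hun : u.val < n := u.isLt
    have hbu : pcBlk p u.val = 0 ∨ pcBlk p u.val = 1 ∨ pcBlk p u.val = 2 := by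
      unfold pcBlk; split_ifs <;> simp
    obtain ⟨x2, hx2⟩ : ∃ w : Fin n, w.val = 3 := ⟨⟨3, by omega⟩, rfl⟩
    obtain ⟨x3, hx3⟩ : ∃ w : Fin n, w.val = 3 + p := ⟨⟨3 + p, hpn⟩, rfl⟩
    have hz : (⟨0, h0⟩ : Fin n).val = 0 := rfl
    have a2 : (pcG n p).Adj ⟨0, h0⟩ x2 := pcG_adj_mk (by omega) (Or.inr (Or.inl ⟨hz, Or.inl hx2⟩))
    have a3 : (pcG n p).Adj ⟨0, h0⟩ x3 := pcG_adj_mk (by omega) (Or.inr (Or.inl ⟨hz, Or.inr hx3⟩))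
    rcases hbu with hu | hu | hu
    · rw [pcBlk_eq_zero_iff] at hu
      by_cases h : u.val = 0
      · rw [show u = (⟨0, h0⟩ : Fin n) from Fin.ext (by omega)]
      · exact (pcG_adj_mk (by omega) (Or.inl (by
          rw [pcBlk_eq_zero_iff.mpr (by omega), pcBlk_eq_zero_iff.mpr (by omega)]))).reachable
    · rw [pcBlk_eq_one_iff] at hu
      by_cases h : u.val = 3
      · exact (by rw [show u = x2 from Fin.ext (by omega)]; exact a2.reachable)
      · exact a2.reachable.trans (pcG_adj_mk (x := x2) (by omega) (Or.inl (by
          rw [pcBlk_eq_one_iff.mpr (by omega), pcBlk_eq_one_iff.mpr (by omega)]))).reachable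
    · rw [pcBlk_eq_two_iff] at hu
      by_cases h : u.val = 3 + p
      · exact (by rw [show u = x3 from Fin.ext (by omega)]; exact a3.reachable)
      · exact a3.reachable.trans (pcG_adj_mk (x := x3) (by omega) (Or.inl (by
          rw [pcBlk_eq_two_iff.mpr (by omega), pcBlk_eq_two_iff.mpr (by omega)]))).reachable
  intro u v
  exact (hreach u).symm.trans (hreach v)

end final

section degrees
variable {n p : ℕ}

lemma interval_ncard {a b : ℕ} (hb : b ≤ n) :
    {i : Fin n | a ≤ i.val ∧ i.val < b}.ncard = b - a := by
  have h : ∀ m ∈ Finset.Ico a b, m < n := fun m hm =>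
    lt_of_lt_of_le (Finset.mem_Ico.mp hm).2 hb
  have he : {i : Fin n | a ≤ i.val ∧ i.val < b} = ↑((Finset.Ico a b).attachFin h) := by
    ext i; simp [Finset.mem_attachFin, Finset.mem_Ico]
  rw [he, Set.ncard_coe_finset, Finset.card_attachFin, Nat.card_Ico]

lemma pcG_deg_tri (hpn : 3 + p < n) {x : Fin n} (hx : x.val = 1 ∨ x.val = 2) :
    2 ≤ ((pcG n p).neighborSet x).ncard := by
  obtain ⟨z, hz⟩ : ∃ w : Fin n, w.val = 0 := ⟨⟨0, by omega⟩, rfl⟩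
  obtain ⟨w, hw⟩ : ∃ w : Fin n, w.val = 3 - x.val := ⟨⟨3 - x.val, by omega⟩, rfl⟩
  have hsub : ({z, w} : Set (Fin n)) ⊆ (pcG n p).neighborSet x := by
    rintro i (rfl | rfl)
    · exact ((pcG_adj_mk (by omega) (Or.inl (by
        rw [pcBlk_eq_zero_iff.mpr (by omega), pcBlk_eq_zero_iff.mpr (by omega)]))) :
        (pcG n p).Adj x i)
    · exact ((pcG_adj_mk (by omega) (Or.inl (by
        rw [pcBlk_eq_zero_iff.mpr (by omega), pcBlk_eq_zero_iff.mpr (by omega)]))) :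
        (pcG n p).Adj x i)
  calc 2 = ({z, w} : Set (Fin n)).ncard := (Set.ncard_pair (by
          intro e; rw [e] at hz; omega)).symm
    _ ≤ _ := Set.ncard_le_ncard hsub (Set.toFinite _)

lemma pcG_deg_zero (hp1 : 1 ≤ p) (hpn : 3 + p < n) {x : Fin n} (hx : x.val = 0) :
    4 ≤ ((pcG n p).neighborSet x).ncard := by
  obtain ⟨w1, h1⟩ : ∃ w : Fin n, w.val = 1 := ⟨⟨1, by omega⟩, rfl⟩
  obtain ⟨w2, h2⟩ : ∃ w : Fin n, w.val = 2 := ⟨⟨2, by omega⟩, rfl⟩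
  obtain ⟨w3, h3⟩ : ∃ w : Fin n, w.val = 3 := ⟨⟨3, by omega⟩, rfl⟩
  obtain ⟨w4, h4⟩ : ∃ w : Fin n, w.val = 3 + p := ⟨⟨3 + p, hpn⟩, rfl⟩
  have hsub : ({w1, w2, w3, w4} : Set (Fin n)) ⊆ (pcG n p).neighborSet x := by
    rintro i (rfl | rfl | rfl | rfl)
    · exact ((pcG_adj_mk (by omega) (Or.inl (by
        rw [pcBlk_eq_zero_iff.mpr (by omega), pcBlk_eq_zero_iff.mpr (by omega)]))) :
        (pcG n p).Adj x i)
    · exact ((pcG_adj_mk (by omega) (Or.inl (by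
        rw [pcBlk_eq_zero_iff.mpr (by omega), pcBlk_eq_zero_iff.mpr (by omega)]))) :
        (pcG n p).Adj x i)
    · exact ((pcG_adj_mk (by omega) (Or.inr (Or.inl ⟨hx, Or.inl h3⟩))) :
        (pcG n p).Adj x i)
    · exact ((pcG_adj_mk (by omega) (Or.inr (Or.inl ⟨hx, Or.inr h4⟩))) :
        (pcG n p).Adj x i)
  have hcard : ({w1, w2, w3, w4} : Set (Fin n)).ncard = 4 := by
    rw [Set.ncard_insert_of_notMem (by
        simp only [Set.mem_insert_iff, Set.mem_singleton_iff]
        push_neg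
        refine ⟨?_, ?_, ?_⟩ <;> intro e <;> rw [e] at h1 <;> omega) (Set.toFinite _),
      Set.ncard_insert_of_notMem (by
        simp only [Set.mem_insert_iff, Set.mem_singleton_iff]
        push_neg
        refine ⟨?_, ?_⟩ <;> intro e <;> rw [e] at h2 <;> omega) (Set.toFinite _),
      Set.ncard_pair (by intro e; rw [e] at h3; omega)]
  calc 4 = ({w1, w2, w3, w4} : Set (Fin n)).ncard := hcard.symm
    _ ≤ _ := Set.ncard_le_ncard hsub (Set.toFinite _)

lemma pcG_deg_v2 (hp1 : 1 ≤ p) (hpn : 3 + p < n) {x : Fin n} (hx : x.val = 3) :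
    p ≤ ((pcG n p).neighborSet x).ncard := by
  obtain ⟨z, hz⟩ : ∃ w : Fin n, w.val = 0 := ⟨⟨0, by omega⟩, rfl⟩
  have hsub : insert z {i : Fin n | 4 ≤ i.val ∧ i.val < 3 + p} ⊆ (pcG n p).neighborSet x := by
    rintro i (rfl | hi)
    · exact ((pcG_adj_mk (by omega) (Or.inr (Or.inr ⟨hz, Or.inl hx⟩))) :
        (pcG n p).Adj x i)
    · obtain ⟨hi1, hi2⟩ := hi
      exact ((pcG_adj_mk (by omega) (Or.inl (by
        rw [pcBlk_eq_one_iff.mpr (by omega), pcBlk_eq_one_iff.mpr (by omega)]))) :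
        (pcG n p).Adj x i)
  have hcard : (insert z {i : Fin n | 4 ≤ i.val ∧ i.val < 3 + p}).ncard = p := by
    rw [Set.ncard_insert_of_notMem (by simp; omega) (Set.toFinite _),
      interval_ncard (by omega)]
    omega
  calc p = _ := hcard.symm
    _ ≤ _ := Set.ncard_le_ncard hsub (Set.toFinite _)

lemma pcG_deg_w2 (hp1 : 1 ≤ p) (hpn : 3 + p < n) {x : Fin n}
    (hx1 : 3 ≤ x.val) (hx2 : x.val < 3 + p) :
    p - 1 ≤ ((pcG n p).neighborSet x).ncard := by
  have hsub : {i : Fin n | 3 ≤ i.val ∧ i.val < 3 + p} \ {x} ⊆ (pcG n p).neighborSet x := by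
    rintro i ⟨⟨hi1, hi2⟩, hix⟩
    rw [Set.mem_singleton_iff] at hix
    exact ((pcG_adj_mk (fun e => hix (Fin.ext e.symm)) (Or.inl (by
      rw [pcBlk_eq_one_iff.mpr (by omega), pcBlk_eq_one_iff.mpr (by omega)]))) :
      (pcG n p).Adj x i)
  have hcard : ({i : Fin n | 3 ≤ i.val ∧ i.val < 3 + p} \ {x}).ncard = p - 1 := by
    rw [Set.ncard_diff_singleton_of_mem (show x ∈ {i : Fin n | 3 ≤ i.val ∧ i.val < 3 + p} from ⟨hx1, hx2⟩),
      interval_ncard (by omega)]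
    omega
  calc p - 1 = _ := hcard.symm
    _ ≤ _ := Set.ncard_le_ncard hsub (Set.toFinite _)

lemma pcG_deg_v3 (hp1 : 1 ≤ p) (hpn : 3 + p < n) {x : Fin n} (hx : x.val = 3 + p) :
    n - 3 - p ≤ ((pcG n p).neighborSet x).ncard := by
  obtain ⟨z, hz⟩ : ∃ w : Fin n, w.val = 0 := ⟨⟨0, by omega⟩, rfl⟩
  have hsub : insert z {i : Fin n | 4 + p ≤ i.val ∧ i.val < n} ⊆ (pcG n p).neighborSet x := by
    rintro i (rfl | hi)
    · exact ((pcG_adj_mk (by omega) (Or.inr (Or.inr ⟨hz, Or.inr hx⟩))) :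
        (pcG n p).Adj x i)
    · obtain ⟨hi1, hi2⟩ := hi
      exact ((pcG_adj_mk (by omega) (Or.inl (by
        rw [pcBlk_eq_two_iff.mpr (by omega), pcBlk_eq_two_iff.mpr (by omega)]))) :
        (pcG n p).Adj x i)
  have hcard : (insert z {i : Fin n | 4 + p ≤ i.val ∧ i.val < n}).ncard = n - 3 - p := by
    rw [Set.ncard_insert_of_notMem (by simp; omega) (Set.toFinite _),
      interval_ncard (by omega)]
    omega
  calc n - 3 - p = _ := hcard.symm
    _ ≤ _ := Set.ncard_le_ncard hsub (Set.toFinite _)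

lemma pcG_deg_w3 (hp1 : 1 ≤ p) (hpn : 3 + p < n) {x : Fin n} (hx : 3 + p ≤ x.val) :
    n - 3 - p - 1 ≤ ((pcG n p).neighborSet x).ncard := by
  have hsub : {i : Fin n | 3 + p ≤ i.val ∧ i.val < n} \ {x} ⊆ (pcG n p).neighborSet x := by
    rintro i ⟨⟨hi1, hi2⟩, hix⟩
    rw [Set.mem_singleton_iff] at hix
    exact ((pcG_adj_mk (fun e => hix (Fin.ext e.symm)) (Or.inl (by
      rw [pcBlk_eq_two_iff.mpr (by omega), pcBlk_eq_two_iff.mpr (by omega)]))) :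
      (pcG n p).Adj x i)
  have hcard : ({i : Fin n | 3 + p ≤ i.val ∧ i.val < n} \ {x}).ncard = n - 3 - p - 1 := by
    rw [Set.ncard_diff_singleton_of_mem (show x ∈ {i : Fin n | 3 + p ≤ i.val ∧ i.val < n} from ⟨hx, x.isLt⟩),
      interval_ncard (by omega)]
    omega
  calc n - 3 - p - 1 = _ := hcard.symm
    _ ≤ _ := Set.ncard_le_ncard hsub (Set.toFinite _)

end degrees

section main
variable {n p : ℕ}

lemma pcG_degsum (hp1 : 1 ≤ p) (hpn : 3 + p < n)
    (hp2 : n ≤ 2*p+6) (hq2 : n ≤ 2*(n-3-p)+6)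
    (hp4 : p = 1 ∨ n ≤ 2*p+4) (hq4 : n-3-p = 1 ∨ n ≤ 2*(n-3-p)+4)
    (h8 : n-3-p = 1 ∨ 8 ≤ n) :
    ∀ x y : Fin n, x ≠ y → ¬(pcG n p).Adj x y →
      n ≤ 2 * (((pcG n p).neighborSet x).ncard + ((pcG n p).neighborSet y).ncard) + 2 := by
  have key : ∀ x y : Fin n, x ≠ y → ¬(pcG n p).Adj x y → pcBlk p x.val ≤ pcBlk p y.val →
      n ≤ 2 * (((pcG n p).neighborSet x).ncard + ((pcG n p).neighborSet y).ncard) + 2 := by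
    intro x y hxy hnadj hble
    have hnot : ¬(pcBlk p x.val = pcBlk p y.val ∨
        (x.val = 0 ∧ (y.val = 3 ∨ y.val = 3 + p)) ∨
        (y.val = 0 ∧ (x.val = 3 ∨ x.val = 3 + p))) := fun hc => hnadj ⟨hxy, hc⟩
    push_neg at hnot
    obtain ⟨hbb, hsp1, hsp2⟩ := hnot
    have hxn : x.val < n := x.isLt
    have hyn : y.val < n := y.isLt
    have hbu : pcBlk p x.val = 0 ∨ pcBlk p x.val = 1 ∨ pcBlk p x.val = 2 := by
      unfold pcBlk; split_ifs <;> simp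
    have hbv : pcBlk p y.val = 0 ∨ pcBlk p y.val = 1 ∨ pcBlk p y.val = 2 := by
      unfold pcBlk; split_ifs <;> simp
    rcases hbu with hu | hu | hu <;> rcases hbv with hv | hv | hv <;>
        rw [hu, hv] at hbb hble <;> try omega
    -- (0,1)
    · rw [pcBlk_eq_zero_iff] at hu
      rw [pcBlk_eq_one_iff] at hv
      by_cases hx0 : x.val = 0
      · have hy3 : y.val ≠ 3 := fun h => (hsp1 hx0).1 h
        have d1 := pcG_deg_zero hp1 hpn hx0
        have d2 := pcG_deg_w2 hp1 hpn hv.1 hv.2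
        omega
      · have d1 := pcG_deg_tri hpn (x := x) (by omega)
        by_cases hy3 : y.val = 3
        · have d2 := pcG_deg_v2 hp1 hpn hy3
          omega
        · have d2 := pcG_deg_w2 hp1 hpn hv.1 hv.2
          omega
    -- (0,2)
    · rw [pcBlk_eq_zero_iff] at hu
      rw [pcBlk_eq_two_iff] at hv
      by_cases hx0 : x.val = 0
      · have hy3 : y.val ≠ 3 + p := fun h => (hsp1 hx0).2 h
        have d1 := pcG_deg_zero hp1 hpn hx0
        have d2 := pcG_deg_w3 hp1 hpn hv
        omega
      · have d1 := pcG_deg_tri hpn (x := x) (by omega)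
        by_cases hy3 : y.val = 3 + p
        · have d2 := pcG_deg_v3 hp1 hpn hy3
          omega
        · have d2 := pcG_deg_w3 hp1 hpn hv
          omega
    -- (1,2)
    · rw [pcBlk_eq_one_iff] at hu
      rw [pcBlk_eq_two_iff] at hv
      by_cases hx3 : x.val = 3
      · have d1 := pcG_deg_v2 hp1 hpn hx3
        by_cases hy3 : y.val = 3 + p
        · have d2 := pcG_deg_v3 hp1 hpn hy3
          omega
        · have d2 := pcG_deg_w3 hp1 hpn hv
          omega
      · have d1 := pcG_deg_w2 hp1 hpn hu.1 hu.2
        by_cases hy3 : y.val = 3 + p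
        · have d2 := pcG_deg_v3 hp1 hpn hy3
          omega
        · have d2 := pcG_deg_w3 hp1 hpn hv
          omega
  intro x y hxy hnadj
  rcases le_total (pcBlk p x.val) (pcBlk p y.val) with hle | hle
  · exact key x y hxy hnadj hle
  · have := key y x (Ne.symm hxy) (fun h => hnadj h.symm) hle
    omega

end main

theorem degreeSum_sharp (n : ℕ) (hn : 5 ≤ n) (hodd : Odd n) :
    ∃ G : SimpleGraph (Fin n), G.Connected ∧
      (∀ x y : Fin n, x ≠ y → ¬ G.Adj x y →
        (n : ℝ) / 2 - 1 ≤ (G.neighborSet x).ncard + (G.neighborSet y).ncard) ∧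
      pc G = 3 := by
  have hodd' : n % 2 = 1 := Nat.odd_iff.mp hodd
  set p : ℕ := if n ≤ 7 then n - 4 else (n - 3) / 2 with hp
  have hp1 : 1 ≤ p := by rw [hp]; split_ifs <;> omega
  have hpn : 3 + p < n := by rw [hp]; split_ifs <;> omega
  have hp2 : n ≤ 2*p+6 := by rw [hp]; split_ifs <;> omega
  have hq2 : n ≤ 2*(n-3-p)+6 := by rw [hp]; split_ifs <;> omega
  have hp4 : p = 1 ∨ n ≤ 2*p+4 := by rw [hp]; split_ifs <;> omega
  have hq4 : n-3-p = 1 ∨ n ≤ 2*(n-3-p)+4 := by rw [hp]; split_ifs <;> omega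
  have h8 : n-3-p = 1 ∨ 8 ≤ n := by rw [hp]; split_ifs <;> omega
  refine ⟨pcG n p, pcG_connected hp1 hpn, ?_, pcG_pc_eq_three hp1 hpn⟩
  intro x y hxy hnadj
  have hnat := pcG_degsum hp1 hpn hp2 hq2 hp4 hq4 h8 x y hxy hnadj
  have h2 : (n : ℝ) ≤ 2 * ((((pcG n p).neighborSet x).ncard : ℝ) +
      (((pcG n p).neighborSet y).ncard : ℝ)) + 2 := by exact_mod_cast hnat
  linarith
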